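/- Let {x_i}_{i∈I} and {x_j}_{j∈J} be finite sets in ℝ^{n_0} and define ℓ(W_1, …, W_L) = Σ_{i∈I} log(1 + exp(W_L ⋯ W_1 x_i)) + Σ_{j∈J} log(1 + exp(−W_L ⋯ W_1 x_j)), where W_k ∈ ℝ^{n_k × n_{k−1}} and n_L = 1. If (W_1(t), …, W_L(t)) is a solution of the gradient flow dW_k/dt = −∂ℓ/∂W_k for all k ∈ [L], then for all k, k' ∈ [L] and all t ≥ 0, ‖W_k(t)‖_F² − ‖W_{k'}(t)‖_F² = ‖W_k(0)‖_F² − ‖W_{k'}(0)‖_F². -/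

import Mathlib

/-- Forward pass of a deep linear network: `fwd n W x k = W_{k} ⋯ W_1 x` (activations at
layer `k`). -/
def fwd (n : ℕ → ℕ) (W : ∀ k : ℕ, Matrix (Fin (n (k + 1))) (Fin (n k)) ℝ)
    (x : Fin (n 0) → ℝ) : ∀ k : ℕ, Fin (n k) → ℝ
  | 0 => x
  | k + 1 => (W k).mulVec (fwd n W x k)

/-- Derivative forward pass: derivative of `fwd` in direction `V`. -/
def dfwd (n : ℕ → ℕ) (Wt Vt : ∀ k : ℕ, Matrix (Fin (n (k + 1))) (Fin (n k)) ℝ)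
    (x : Fin (n 0) → ℝ) : ∀ k : ℕ, Fin (n k) → ℝ
  | 0 => 0
  | k + 1 => (Wt k).mulVec (dfwd n Wt Vt x k) + (Vt k).mulVec (fwd n Wt x k)

variable {n : ℕ → ℕ} {Wt : ∀ k : ℕ, Matrix (Fin (n (k + 1))) (Fin (n k)) ℝ}
  {x : Fin (n 0) → ℝ} {k : ℕ}


lemma dfwd_zero_of_le (E : Matrix (Fin (n (k+1))) (Fin (n k)) ℝ) :
    ∀ m ≤ k, dfwd n Wt (Function.update (fun _ => 0) k E) x m = 0 := by
  intro m hm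
  induction m with
  | zero => rfl
  | succ m ih =>
      have hmk : m ≠ k := by omega
      rw [dfwd, ih (by omega), Function.update_of_ne hmk]
      simp [Matrix.zero_mulVec]

lemma dfwd_add (E F : Matrix (Fin (n (k+1))) (Fin (n k)) ℝ) :
    ∀ m, dfwd n Wt (Function.update (fun _ => 0) k (E + F)) x m =
      dfwd n Wt (Function.update (fun _ => 0) k E) x m +
      dfwd n Wt (Function.update (fun _ => 0) k F) x m := by
  intro m
  induction m with
  | zero => simp [dfwd]
  | succ m ih =>
      rcases eq_or_ne m k with h | h
      · subst h
        rw [dfwd, dfwd, dfwd, ih]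
        simp [Function.update_self, Matrix.add_mulVec, Matrix.mulVec_add]
        abel
      · simp only [dfwd, ih, Function.update_of_ne h, Matrix.zero_mulVec,
          Matrix.mulVec_add, add_zero]

lemma dfwd_smul (c : ℝ) (E : Matrix (Fin (n (k+1))) (Fin (n k)) ℝ) :
    ∀ m, dfwd n Wt (Function.update (fun _ => 0) k (c • E)) x m =
      c • dfwd n Wt (Function.update (fun _ => 0) k E) x m := by
  intro m
  induction m with
  | zero => simp [dfwd]
  | succ m ih =>
      rcases eq_or_ne m k with h | h
      · subst h
        rw [dfwd, dfwd, ih]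
        simp [Function.update_self, Matrix.smul_mulVec, Matrix.mulVec_smul, smul_add]
      · simp only [dfwd, ih, Function.update_of_ne h, Matrix.zero_mulVec,
          Matrix.mulVec_smul, add_zero]

lemma dfwd_self : ∀ m, k < m →
    dfwd n Wt (Function.update (fun _ => 0) k (Wt k)) x m = fwd n Wt x m := by
  intro m
  induction m with
  | zero => omega
  | succ m ih =>
      intro hm
      rcases eq_or_ne m k with h | h
      · subst h
        rw [dfwd, dfwd_zero_of_le _ m le_rfl, Function.update_self, fwd]
        simp [Matrix.mulVec_zero]
      · rw [dfwd, ih (by omega), Function.update_of_ne h, fwd]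
        simp [Matrix.zero_mulVec]

lemma fwd_update (ε : ℝ) (E : Matrix (Fin (n (k+1))) (Fin (n k)) ℝ) :
    ∀ m, fwd n (Function.update Wt k (Wt k + ε • E)) x m =
      fwd n Wt x m + ε • dfwd n Wt (Function.update (fun _ => 0) k E) x m := by
  intro m
  induction m with
  | zero => simp [fwd, dfwd]
  | succ m ih =>
      rcases eq_or_ne m k with h | h
      · subst h
        rw [fwd, fwd, dfwd, ih, dfwd_zero_of_le _ m le_rfl,
          Function.update_self, Function.update_self]
        simp [Matrix.add_mulVec, Matrix.mulVec_zero, Matrix.smul_mulVec]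
      · rw [fwd, fwd, dfwd, ih, Function.update_of_ne h, Function.update_of_ne h]
        simp [Matrix.mulVec_add, Matrix.mulVec_smul, smul_add]

lemma dfwd_updzero (m : ℕ) :
    dfwd n Wt (Function.update (fun _ => 0) k (0 : Matrix (Fin (n (k+1))) (Fin (n k)) ℝ)) x m
      = 0 := by
  simpa using dfwd_smul (n := n) (Wt := Wt) (x := x) (k := k) (0 : ℝ) 0 m

lemma dfwd_sum {α : Type*} (s : Finset α) (E : α → Matrix (Fin (n (k+1))) (Fin (n k)) ℝ)
    (m : ℕ) :
    dfwd n Wt (Function.update (fun _ => 0) k (∑ a ∈ s, E a)) x m =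
      ∑ a ∈ s, dfwd n Wt (Function.update (fun _ => 0) k (E a)) x m := by
  classical
  induction s using Finset.induction_on with
  | empty => simpa using dfwd_updzero (n := n) (Wt := Wt) (x := x) (k := k) m
  | insert _ _ h ih =>
      rw [Finset.sum_insert h, dfwd_add, ih, Finset.sum_insert h]

lemma key (m : ℕ) (hm : k < m) :
    ∑ a, ∑ b, Wt k a b *
      (∑ a', dfwd n Wt (Function.update (fun _ => 0) k (Matrix.single a b 1)) x m a') =
    ∑ a', fwd n Wt x m a' := by
  classical
  have h1 : dfwd n Wt (Function.update (fun _ => 0) k (Wt k)) x m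
      = ∑ a, ∑ b, Wt k a b •
          dfwd n Wt (Function.update (fun _ => 0) k (Matrix.single a b 1)) x m := by
    have hWk : Wt k = ∑ a : Fin (n (k+1)), ∑ b : Fin (n k),
        Matrix.single a b (Wt k a b) := Matrix.matrix_eq_sum_single (Wt k)
    conv_lhs => rw [hWk]
    rw [dfwd_sum]
    refine Finset.sum_congr rfl fun a _ => ?_
    rw [dfwd_sum]
    refine Finset.sum_congr rfl fun b _ => ?_
    rw [← dfwd_smul, Matrix.smul_single, smul_eq_mul, mul_one]
  calc ∑ a, ∑ b, Wt k a b *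
        (∑ a', dfwd n Wt (Function.update (fun _ => 0) k (Matrix.single a b 1)) x m a')
      = ∑ a', (∑ a, ∑ b, Wt k a b •
          dfwd n Wt (Function.update (fun _ => 0) k (Matrix.single a b 1)) x m) a' := by
        simp only [Finset.sum_apply, Pi.smul_apply, smul_eq_mul, Finset.mul_sum]
        exact (Finset.sum_congr rfl fun a _ => Finset.sum_comm).trans Finset.sum_comm
    _ = ∑ a', fwd n Wt x m a' := by rw [← h1, dfwd_self m hm]

lemma hasDerivAt_term (z c : ℝ) :
    HasDerivAt (fun ε : ℝ => Real.log (1 + Real.exp (z + ε * c)))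
      (Real.exp z / (1 + Real.exp z) * c) 0 := by
  have h1 : HasDerivAt (fun ε : ℝ => z + ε * c) c 0 := by
    simpa using ((hasDerivAt_id (0:ℝ)).mul_const c).const_add z
  have h3 := ((hasDerivAt_const (0:ℝ) (1:ℝ)).add h1.exp).log (by simp only [Pi.add_apply]; positivity)
  simp only [Pi.add_apply, zero_mul, add_zero, zero_add] at h3
  convert h3 using 1
  ring

lemma hasDerivAt_term_neg (z c : ℝ) :
    HasDerivAt (fun ε : ℝ => Real.log (1 + Real.exp (-(z + ε * c))))
      (Real.exp (-z) / (1 + Real.exp (-z)) * (-c)) 0 := by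
  have heq : (fun ε : ℝ => Real.log (1 + Real.exp (-(z + ε * c))))
      = fun ε : ℝ => Real.log (1 + Real.exp (-z + ε * -c)) := by
    funext ε; ring_nf
  rw [heq]; exact hasDerivAt_term (-z) (-c)


/-- balancedness conservation law in the proof of Theorem 5.  Along the
gradient flow of the deep linear cross-entropy loss, the differences
`‖W_k(t)‖_F² − ‖W_{k'}(t)‖_F²` are conserved for all layers `k, k' ∈ [L]`. -/
theorem stmt12 {ι κ : Type*} [Fintype ι] [Fintype κ] (L : ℕ) (hL : 1 ≤ L)
    (n : ℕ → ℕ) (hnL : n L = 1)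
    (xI : ι → Fin (n 0) → ℝ) (xJ : κ → Fin (n 0) → ℝ)
    (loss : (∀ k : ℕ, Matrix (Fin (n (k + 1))) (Fin (n k)) ℝ) → ℝ)
    (hloss : ∀ Wt, loss Wt =
      (∑ i, Real.log (1 + Real.exp (∑ a, fwd n Wt (xI i) L a))) +
        ∑ j, Real.log (1 + Real.exp (-(∑ a, fwd n Wt (xJ j) L a))))
    (W : ℝ → ∀ k : ℕ, Matrix (Fin (n (k + 1))) (Fin (n k)) ℝ)
    -- gradient flow `dW_k/dt = −∂ℓ/∂W_k`
    (hflow : ∀ t ≥ (0 : ℝ), ∀ k < L, ∀ (a : Fin (n (k + 1))) (b : Fin (n k)),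
      HasDerivAt (fun τ => W τ k a b)
        (-(deriv (fun ε : ℝ =>
            loss (Function.update (W t) k (W t k + ε • Matrix.single a b 1))) 0)) t) :
    ∀ k < L, ∀ k' < L, ∀ t ≥ (0 : ℝ),
      (∑ a, ∑ b, (W t k a b) ^ 2) - (∑ a, ∑ b, (W t k' a b) ^ 2) =
      (∑ a, ∑ b, (W 0 k a b) ^ 2) - (∑ a, ∑ b, (W 0 k' a b) ^ 2) := by
  classical
  set s : ℝ → ℝ := fun r => Real.exp r / (1 + Real.exp r) with hs
  set z : ℝ → (Fin (n 0) → ℝ) → ℝ := fun τ x => ∑ a, fwd n (W τ) x L a with hz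
  set G : ℝ → ℝ := fun τ =>
    (∑ i, s (z τ (xI i)) * z τ (xI i)) - ∑ j, s (-(z τ (xJ j))) * z τ (xJ j) with hG
  -- Step 1: explicit formula for the loss derivative in direction `stdBasisMatrix a b 1`
  have hDval : ∀ t : ℝ, ∀ k < L, ∀ (a : Fin (n (k + 1))) (b : Fin (n k)),
      deriv (fun ε : ℝ =>
          loss (Function.update (W t) k (W t k + ε • Matrix.single a b 1))) 0 =
        (∑ i, s (z t (xI i)) * (∑ a', dfwd n (W t)
          (Function.update (fun _ => 0) k (Matrix.single a b 1)) (xI i) L a')) +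
        ∑ j, s (-(z t (xJ j))) * (-(∑ a', dfwd n (W t)
          (Function.update (fun _ => 0) k (Matrix.single a b 1)) (xJ j) L a')) := by
    intro t k hk a b
    set c : (Fin (n 0) → ℝ) → ℝ := fun x => ∑ a', dfwd n (W t)
      (Function.update (fun _ => 0) k (Matrix.single a b 1)) x L a' with hc
    have hout : ∀ (ε : ℝ) (x : Fin (n 0) → ℝ),
        (∑ a', fwd n (Function.update (W t) k
            (W t k + ε • Matrix.single a b 1)) x L a') = z t x + ε * c x := by
      intro ε x
      rw [fwd_update]
      simp [hz, hc, Finset.sum_add_distrib, Finset.mul_sum]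
    have hfun : (fun ε : ℝ =>
        loss (Function.update (W t) k (W t k + ε • Matrix.single a b 1))) =
        fun ε => (∑ i, Real.log (1 + Real.exp (z t (xI i) + ε * c (xI i)))) +
          ∑ j, Real.log (1 + Real.exp (-(z t (xJ j) + ε * c (xJ j)))) := by
      funext ε
      rw [hloss]
      simp only [hout]
    rw [hfun]
    exact ((HasDerivAt.fun_sum fun i _ => hasDerivAt_term (z t (xI i)) (c (xI i))).fun_add
      (HasDerivAt.fun_sum fun j _ => hasDerivAt_term_neg (z t (xJ j)) (c (xJ j)))).deriv
  -- Step 2: derivative of the squared Frobenius norm of layer `k`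
  have hsq : ∀ τ ≥ (0 : ℝ), ∀ k < L,
      HasDerivAt (fun σ => ∑ a, ∑ b, (W σ k a b) ^ 2) (-2 * G τ) τ := by
    intro τ hτ k hk
    have h := HasDerivAt.fun_sum (u := Finset.univ) fun (a : Fin (n (k + 1))) _ =>
      HasDerivAt.fun_sum (u := Finset.univ) fun (b : Fin (n k)) _ =>
        (hflow τ hτ k hk a b).fun_pow 2
    refine h.congr_deriv ?_
    symm
    have hkey : ∀ x : Fin (n 0) → ℝ, ∑ a, ∑ b, W τ k a b *
        (∑ a', dfwd n (W τ)
          (Function.update (fun _ => 0) k (Matrix.single a b 1)) x L a') = z τ x :=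
      fun x => key L hk
    simp only [hDval τ k hk, pow_one, Nat.cast_ofNat]
    have hterm : ∀ (a : Fin (n (k + 1))) (b : Fin (n k)),
        (2 : ℝ) * W τ k a b *
          (-((∑ i, s (z τ (xI i)) * (∑ a', dfwd n (W τ)
              (Function.update (fun _ => 0) k (Matrix.single a b 1)) (xI i) L a')) +
            ∑ j, s (-(z τ (xJ j))) * (-(∑ a', dfwd n (W τ)
              (Function.update (fun _ => 0) k (Matrix.single a b 1)) (xJ j) L a')))) =
        (∑ i, (-2 * s (z τ (xI i))) * (W τ k a b * (∑ a', dfwd n (W τ)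
            (Function.update (fun _ => 0) k (Matrix.single a b 1)) (xI i) L a'))) +
          ∑ j, (2 * s (-(z τ (xJ j)))) * (W τ k a b * (∑ a', dfwd n (W τ)
            (Function.update (fun _ => 0) k (Matrix.single a b 1)) (xJ j) L a')) := by
      intro a b
      rw [neg_add, mul_add, ← Finset.sum_neg_distrib, ← Finset.sum_neg_distrib,
        Finset.mul_sum, Finset.mul_sum]
      congr 1 <;> exact Finset.sum_congr rfl fun _ _ => by ring
    have hLHS : -2 * G τ = (∑ i, (-2 * s (z τ (xI i))) * z τ (xI i)) +
        ∑ j, (2 * s (-(z τ (xJ j)))) * z τ (xJ j) := by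
      rw [hG, mul_sub, Finset.mul_sum, Finset.mul_sum, sub_eq_add_neg, ← Finset.sum_neg_distrib]
      congr 1 <;> exact Finset.sum_congr rfl fun _ _ => by ring
    rw [hLHS]
    symm
    calc ∑ a, ∑ b, (2 : ℝ) * W τ k a b ^ (2 - 1) *
          (-((∑ i, s (z τ (xI i)) * (∑ a', dfwd n (W τ)
              (Function.update (fun _ => 0) k (Matrix.single a b 1)) (xI i) L a')) +
            ∑ j, s (-(z τ (xJ j))) * (-(∑ a', dfwd n (W τ)
              (Function.update (fun _ => 0) k (Matrix.single a b 1)) (xJ j) L a')))) =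
        ∑ a, ∑ b, ((∑ i, (-2 * s (z τ (xI i))) * (W τ k a b * (∑ a', dfwd n (W τ)
            (Function.update (fun _ => 0) k (Matrix.single a b 1)) (xI i) L a'))) +
          ∑ j, (2 * s (-(z τ (xJ j)))) * (W τ k a b * (∑ a', dfwd n (W τ)
            (Function.update (fun _ => 0) k (Matrix.single a b 1)) (xJ j) L a'))) := by
          refine Finset.sum_congr rfl fun a _ => Finset.sum_congr rfl fun b _ => ?_
          rw [pow_one]
          exact hterm a b
      _ = (∑ i, (-2 * s (z τ (xI i))) * z τ (xI i)) +
          ∑ j, (2 * s (-(z τ (xJ j)))) * z τ (xJ j) := by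
          simp only [Finset.sum_add_distrib]
          congr 1
          · refine ((Finset.sum_congr rfl fun a _ => Finset.sum_comm).trans
              Finset.sum_comm).trans ?_
            refine Finset.sum_congr rfl fun i _ => ?_
            rw [← hkey (xI i), Finset.mul_sum]
            exact Finset.sum_congr rfl fun a _ => (Finset.mul_sum ..).symm
          · refine ((Finset.sum_congr rfl fun a _ => Finset.sum_comm).trans
              Finset.sum_comm).trans ?_
            refine Finset.sum_congr rfl fun j _ => ?_
            rw [← hkey (xJ j), Finset.mul_sum]
            exact Finset.sum_congr rfl fun a _ => (Finset.mul_sum ..).symm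
  -- Step 3: conservation
  intro k hk k' hk' t ht
  set f : ℝ → ℝ := fun τ =>
    (∑ a, ∑ b, (W τ k a b) ^ 2) - (∑ a, ∑ b, (W τ k' a b) ^ 2) with hf
  have hderiv : ∀ τ ≥ (0 : ℝ), HasDerivAt f 0 τ := by
    intro τ hτ
    simpa using (hsq τ hτ k hk).fun_sub (hsq τ hτ k' hk')
  have := constant_of_has_deriv_right_zero (f := f) (a := 0) (b := t)
    (fun τ hτ => (hderiv τ hτ.1).continuousAt.continuousWithinAt)
    (fun τ hτ => (hderiv τ hτ.1).hasDerivWithinAt)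
  exact this t ⟨ht, le_rfl⟩
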